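/- Let U(y) be the formal power series with non-negative coefficients satisfying U = y(1+U)^2 and U(0)=0, and define S(y) = 2y/(1+y) - y - U(y)^2/(y(1+2U(y))^3) as a formal power series. Then S satisfies the polynomial equation (y^5 + 8y^4 + 25y^3 + 38y^2 + 28y + 8)S^2 + (2y^6 + 12y^5 + 20y^4 + 10y^3 - 5y^2 - 4y + 1)S + (y^7 + 4y^6 - y^5) = 0. -/

import Mathlib

open PowerSeries

/-- with `U` the power series satisfying `U = y(1+U)^2`, `U(0)=0`, and
`S = 2y/(1+y) - y - U^2/(y(1+2U)^3)` (stated multiplied out by the invertible-times-`y`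
factor `y(1+y)(1+2U)^3`, which determines `S` uniquely since `ℚ⟦y⟧` is a domain),
`S` satisfies the displayed quadratic equation. -/
theorem stmt_0 (U S : PowerSeries ℚ)
    (hU0 : constantCoeff U = 0)
    (hU : U = X * (1 + U)^2)
    (hS : S * (X * (1 + X) * (1 + 2*U)^3) =
      2*X * (X * (1 + 2*U)^3) - X * (X * (1 + X) * (1 + 2*U)^3) - (1 + X) * U^2) :
    (X^5 + 8*X^4 + 25*X^3 + 38*X^2 + 28*X + 8) * S^2
      + (2*X^6 + 12*X^5 + 20*X^4 + 10*X^3 - 5*X^2 - 4*X + 1) * S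
      + (X^7 + 4*X^6 - X^5) = 0 := by
  set D : PowerSeries ℚ := X * (1 + X) * (1 + 2*U)^3 with hD
  have hX : (X : PowerSeries ℚ) ≠ 0 := X_ne_zero
  have h1X : (1 + X : PowerSeries ℚ) ≠ 0 := fun h => by
    have := congrArg (constantCoeff (R := ℚ)) h
    simp at this
  have h12U : (1 + 2*U : PowerSeries ℚ) ≠ 0 := fun h => by
    have := congrArg (constantCoeff (R := ℚ)) h
    simp [hU0] at this
  have hDne : D ≠ 0 := mul_ne_zero (mul_ne_zero hX h1X) (pow_ne_zero 3 h12U)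
  have key : ((X^5 + 8*X^4 + 25*X^3 + 38*X^2 + 28*X + 8) * S^2
      + (2*X^6 + 12*X^5 + 20*X^4 + 10*X^3 - 5*X^2 - 4*X + 1) * S
      + (X^7 + 4*X^6 - X^5)) * D^2 = 0 := by
    have R : PowerSeries ℚ := 0
    linear_combination
      ((X^5 + 8*X^4 + 25*X^3 + 38*X^2 + 28*X + 8) *
         (S * D + (2*X * (X * (1 + 2*U)^3) - X * D - (1 + X) * U^2))
        + (2*X^6 + 12*X^5 + 20*X^4 + 10*X^3 - 5*X^2 - 4*X + 1) * D) * hS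
      + ((8)*U^3 + (-1)*X^1*U^1 + (2)*X^1*U^2 + (48)*X^1*U^3 + (-1)*X^2 + (-14)*X^2*U^1
        + (-33)*X^2*U^2 + (32)*X^2*U^3 + (-64)*X^2*U^4 + (-4)*X^3 + (-46)*X^3*U^1
        + (-152)*X^3*U^2 + (-192)*X^3*U^3 + (-256)*X^3*U^4 + (-6)*X^4 + (-64)*X^4*U^1
        + (-238)*X^4*U^2 + (-408)*X^4*U^3 + (-384)*X^4*U^4 + (-4)*X^5 + (-41)*X^5*U^1
        + (-162)*X^5*U^2 + (-304)*X^5*U^3 + (-256)*X^5*U^4 + (-1)*X^6 + (-10)*X^6*U^1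
        + (-41)*X^6*U^2 + (-80)*X^6*U^3 + (-64)*X^6*U^4) * hU
  rcases mul_eq_zero.mp key with h | h
  · exact h
  · exact absurd (pow_eq_zero_iff (by norm_num) |>.mp h) hDne
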